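/- The number of anchored subsets of the set F of finitely supported sequences in ℕ₀^ℕ with cardinality exactly n is at most ((n−1)!)², independently of any ambient dimension. -/

import Mathlib

/-- `Λ` is downward closed (as a finite set of finitely supported multi-indices). -/
def DownwardClosedF (Λ : Finset (ℕ →₀ ℕ)) : Prop :=
  ∀ ν ∈ Λ, ∀ μ : ℕ →₀ ℕ, μ ≤ ν → μ ∈ Λ

/-- `Λ` is anchored: downward closed, and containing `e_j` forces containing all `e_{j'}`
for `j' ≤ j`. -/
def Anchored (Λ : Finset (ℕ →₀ ℕ)) : Prop :=
  DownwardClosedF Λ ∧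
    ∀ j j' : ℕ, Finsupp.single j 1 ∈ Λ → j' ≤ j → Finsupp.single j' 1 ∈ Λ

namespace AnchoredAux

abbrev M := ℕ →₀ ℕ

lemma single_inj {j j' : ℕ} (h : Finsupp.single j (1:ℕ) = Finsupp.single j' 1) : j = j' := by
  rcases (Finsupp.single_eq_single_iff _ _ _ _).mp h with ⟨h1,_⟩|⟨h1,_⟩
  · exact h1
  · simp at *

lemma zero_mem {Λ : Finset M} (hdc : DownwardClosedF Λ) (h : Λ.Nonempty) : 0 ∈ Λ := by
  obtain ⟨ν, hν⟩ := h
  exact hdc ν hν 0 (zero_le)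

lemma exists_maximal_ge {Λ : Finset M} {ν : M} (hν : ν ∈ Λ) :
    ∃ m ∈ Λ, ν ≤ m ∧ ∀ ρ ∈ Λ, ¬ m < ρ := by
  classical
  have hne : (Λ.filter (fun μ => ν ≤ μ)).Nonempty := ⟨ν, by simp [hν]⟩
  obtain ⟨m, hmM⟩ := Finset.exists_maximal hne
  have hm : m ∈ Λ.filter (fun μ => ν ≤ μ) := hmM.1
  have hmax : ∀ ρ ∈ Λ.filter (fun μ => ν ≤ μ), ¬ m < ρ :=
    fun ρ hρ hlt => not_le_of_gt hlt (hmM.2 hρ hlt.le)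
  rw [Finset.mem_filter] at hm
  refine ⟨m, hm.1, hm.2, fun ρ hρ hlt => ?_⟩
  exact hmax ρ (Finset.mem_filter.mpr ⟨hρ, hm.2.trans hlt.le⟩) hlt

/-- The shrink lemma: from an anchored set of cardinality ≥ 2 one can remove a nonzero
element keeping it anchored. -/
lemma exists_erase_anchored {Λ : Finset M} (hΛ : Anchored Λ) (h2 : 2 ≤ Λ.card) :
    ∃ ν ∈ Λ, ν ≠ 0 ∧ Anchored (Λ.erase ν) := by
  classical
  obtain ⟨hdc, hanc⟩ := hΛ
  have hne : Λ.Nonempty := Finset.card_pos.mp (by omega)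
  -- a nonzero element exists
  have hnz : ∃ ν ∈ Λ, ν ≠ 0 := by
    by_contra h
    push_neg at h
    have : Λ ⊆ {0} := fun ν hν => by simp [h ν hν]
    have := Finset.card_le_card this
    simp at this; omega
  by_cases hcase : ∃ ν ∈ Λ, ν ≠ 0 ∧ (∀ j, ν ≠ Finsupp.single j 1) ∧ ∀ ρ ∈ Λ, ¬ ν < ρ
  · obtain ⟨ν, hν, hν0, hνs, hmax⟩ := hcase
    refine ⟨ν, hν, hν0, ?_, ?_⟩
    · intro ρ hρ μ hμ
      rw [Finset.mem_erase] at hρ ⊢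
      refine ⟨?_, hdc ρ hρ.2 μ hμ⟩
      rintro rfl
      exact hmax ρ hρ.2 (lt_of_le_of_ne hμ (Ne.symm hρ.1))
    · intro j j' hj hjj'
      rw [Finset.mem_erase] at hj ⊢
      exact ⟨fun h => hνs j' h.symm, hanc j j' hj.2 hjj'⟩
  · -- every nonzero maximal element is a Kronecker delta
    push_neg at hcase
    have hms : ∀ m ∈ Λ, m ≠ 0 → (∀ ρ ∈ Λ, ¬ m < ρ) → ∃ j, m = Finsupp.single j 1 := by
      intro m hm hm0 hmax
      by_contra h
      push_neg at h
      obtain ⟨ρ, hρ, hlt⟩ := hcase m hm hm0 h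
      exact (hmax ρ hρ) hlt
    -- some Kronecker delta is in Λ
    obtain ⟨ν₀, hν₀, hν₀0⟩ := hnz
    obtain ⟨m, hm, hνm, hmax⟩ := exists_maximal_ge hν₀
    have hm0 : m ≠ 0 := by
      rintro rfl
      exact hν₀0 (nonpos_iff_eq_zero.mp hνm)
    obtain ⟨j₀, hj₀⟩ := hms m hm hm0 hmax
    -- index set
    set C : Finset ℕ := (Λ.sup Finsupp.support).filter (fun j => Finsupp.single j 1 ∈ Λ)
      with hC
    have hmemC : ∀ j : ℕ, Finsupp.single j 1 ∈ Λ → j ∈ C := by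
      intro j hj
      rw [hC, Finset.mem_filter]
      refine ⟨Finset.mem_sup.mpr ⟨_, hj, ?_⟩, hj⟩
      simp [Finsupp.support_single_ne_zero j (one_ne_zero)]
    have hCne : C.Nonempty := ⟨j₀, hmemC j₀ (hj₀ ▸ hm)⟩
    set J := C.max' hCne with hJ
    have hJΛ : Finsupp.single J 1 ∈ Λ := (Finset.mem_filter.mp (C.max'_mem hCne)).2
    have hJtop : ∀ j : ℕ, Finsupp.single j 1 ∈ Λ → j ≤ J := fun j hj =>
      C.le_max' j (hmemC j hj)
    -- single J 1 is maximal in Λ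
    have hJmax : ∀ ρ ∈ Λ, ¬ Finsupp.single J 1 < ρ := by
      intro ρ hρ hlt
      obtain ⟨m', hm', hρm', hmax'⟩ := exists_maximal_ge hρ
      have hm'0 : m' ≠ 0 := by
        rintro rfl
        have := nonpos_iff_eq_zero.mp hρm'
        subst this
        exact (not_lt_of_ge (zero_le)) hlt
      obtain ⟨j', hj'⟩ := hms m' hm' hm'0 hmax'
      have hle : Finsupp.single J (1:ℕ) ≤ m' := le_of_lt (lt_of_lt_of_le hlt hρm')
      have : (1:ℕ) ≤ m' J := by
        have := Finsupp.le_def.mp hle J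
        simpa using this
      have hj'J : j' = J := by
        by_contra hne'
        rw [hj'] at this
        rw [Finsupp.single_apply_eq_zero.mpr (fun h => absurd h.symm hne')] at this
        omega
      rw [hj', hj'J] at hρm'
      exact absurd (lt_of_lt_of_le hlt hρm') (lt_irrefl _)
    refine ⟨Finsupp.single J 1, hJΛ, by simp, ?_, ?_⟩
    · intro ρ hρ μ hμ
      rw [Finset.mem_erase] at hρ ⊢
      refine ⟨?_, hdc ρ hρ.2 μ hμ⟩
      rintro rfl
      exact hJmax ρ hρ.2 (lt_of_le_of_ne hμ (Ne.symm hρ.1))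
    · intro j j' hj hjj'
      rw [Finset.mem_erase] at hj ⊢
      have hjΛ : Finsupp.single j 1 ∈ Λ := hj.2
      have hj'Λ : Finsupp.single j' 1 ∈ Λ := hanc j j' hjΛ hjj'
      refine ⟨fun h => ?_, hj'Λ⟩
      have : j' = J := single_inj h
      have : j ≠ J := fun h' => hj.1 (by rw [h'])
      have := hJtop j hjΛ
      omega

/-- Support bound: indices in the support of elements of an anchored set of cardinality `n`
are at most `n - 2`. -/
lemma support_bound {Λ : Finset M} (hΛ : Anchored Λ) {ν : M} (hν : ν ∈ Λ) {j : ℕ}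
    (hj : j ∈ ν.support) : j + 2 ≤ Λ.card := by
  classical
  obtain ⟨hdc, hanc⟩ := hΛ
  have hjν : Finsupp.single j 1 ≤ ν := by
    rw [Finsupp.single_le_iff]
    have := Finsupp.mem_support_iff.mp hj
    omega
  have hjΛ : Finsupp.single j 1 ∈ Λ := hdc ν hν _ hjν
  have hall : ∀ i ≤ j, Finsupp.single i 1 ∈ Λ := fun i hi => hanc j i hjΛ hi
  set s : Finset M := insert 0 ((Finset.range (j+1)).image fun i => Finsupp.single i 1)
    with hs
  have hsub : s ⊆ Λ := by
    intro μ hμ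
    rw [hs, Finset.mem_insert] at hμ
    rcases hμ with rfl | hμ
    · exact zero_mem hdc ⟨ν, hν⟩
    · obtain ⟨i, hi, rfl⟩ := Finset.mem_image.mp hμ
      exact hall i (by simpa using Nat.lt_succ_iff.mp (Finset.mem_range.mp hi))
  have hcard : s.card = j + 2 := by
    rw [hs, Finset.card_insert_of_notMem, Finset.card_image_of_injOn]
    · simp
    · intro a _ b _ h
      exact single_inj h
    · intro h
      obtain ⟨i, _, hi⟩ := Finset.mem_image.mp h
      exact (by simp : Finsupp.single i (1:ℕ) ≠ 0) hi
  calc j + 2 = s.card := hcard.symm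
    _ ≤ Λ.card := Finset.card_le_card hsub

/-- The subtype of anchored sets of cardinality `n`. -/
abbrev A (n : ℕ) := {Λ : Finset M // Anchored Λ ∧ Λ.card = n}

noncomputable def recover {n : ℕ} (p : A n) (i : Fin n) : M :=
  (p.1.equivFin.symm (Fin.cast p.2.2.symm i)).1

/-- The injection step. -/
lemma step (n : ℕ) :
    ∃ f : A (n+2) → A (n+1) × Fin (n+1) × Fin (n+1), Function.Injective f := by
  classical
  -- data for each anchored set
  have key : ∀ x : A (n+2), ∃ y : A (n+1) × Fin (n+1) × Fin (n+1),
      ∃ ν : M, ν ∈ x.1 ∧ y.1.1 = x.1.erase ν ∧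
        ν = recover y.1 y.2.2 + Finsupp.single (y.2.1 : ℕ) 1 := by
    intro ⟨Λ, hA, hc⟩
    obtain ⟨ν, hνΛ, hν0, hanc'⟩ := exists_erase_anchored hA (by omega)
    have hScard : (Λ.erase ν).card = n + 1 := by
      rw [Finset.card_erase_of_mem hνΛ, hc]
      omega
    have hsupp : ν.support.Nonempty := Finsupp.support_nonempty_iff.mpr hν0
    set j := ν.support.max' hsupp with hjdef
    have hjν : j ∈ ν.support := ν.support.max'_mem hsupp
    have hjlt : j < n + 1 := by
      have := support_bound hA hνΛ hjν
      omega
    have hjle : Finsupp.single j 1 ≤ ν := by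
      rw [Finsupp.single_le_iff]
      have := Finsupp.mem_support_iff.mp hjν
      omega
    set μ := ν - Finsupp.single j 1 with hμdef
    have hμν : μ + Finsupp.single j 1 = ν := tsub_add_cancel_of_le hjle
    have hμle : μ ≤ ν := tsub_le_self
    have hμne : μ ≠ ν := by
      intro h
      have h2 : μ j = ν j := by rw [h]
      rw [hμdef, Finsupp.tsub_apply] at h2
      have h1 : (1:ℕ) ≤ ν j := Finsupp.single_le_iff.mp hjle
      simp at h2
      omega
    have hμS : μ ∈ Λ.erase ν :=
      Finset.mem_erase.mpr ⟨hμne, hA.1 ν hνΛ μ hμle⟩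
    set p : A (n+1) := ⟨Λ.erase ν, hanc', hScard⟩ with hp
    refine ⟨⟨p, ⟨j, hjlt⟩, Fin.cast hScard (p.1.equivFin ⟨μ, hμS⟩)⟩, ν, hνΛ, rfl, ?_⟩
    have hrec : recover p (Fin.cast hScard (p.1.equivFin ⟨μ, hμS⟩)) = μ := by
      unfold recover
      have : Fin.cast p.2.2.symm (Fin.cast hScard (p.1.equivFin ⟨μ, hμS⟩))
          = p.1.equivFin ⟨μ, hμS⟩ := by
        apply Fin.ext
        simp
      rw [this, Equiv.symm_apply_apply]
    simp only [hrec]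
    exact hμν.symm
  choose f ν hν hS hrec using key
  refine ⟨f, fun x₁ x₂ heq => ?_⟩
  have hν1 : ν x₁ = ν x₂ := by
    rw [hrec x₁, hrec x₂, heq]
  have hΛ : x₁.1 = x₂.1 := by
    have e1 : x₁.1 = insert (ν x₁) (x₁.1.erase (ν x₁)) := (Finset.insert_erase (hν x₁)).symm
    have e2 : x₂.1 = insert (ν x₂) (x₂.1.erase (ν x₂)) := (Finset.insert_erase (hν x₂)).symm
    rw [e1, e2, ← hS x₁, ← hS x₂, hν1, heq]
  exact Subtype.ext hΛ

lemma A_zero_subsingleton : Subsingleton (A 0) := by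
  constructor
  rintro ⟨Λ₁, _, h₁⟩ ⟨Λ₂, _, h₂⟩
  apply Subtype.ext
  simp only []
  rw [Finset.card_eq_zero.mp h₁, Finset.card_eq_zero.mp h₂]

lemma A_one_subsingleton : Subsingleton (A 1) := by
  constructor
  have key : ∀ Λ : Finset M, Anchored Λ → Λ.card = 1 → Λ = {0} := by
    intro Λ hA hc
    obtain ⟨a, ha⟩ := Finset.card_eq_one.mp hc
    have h0 : (0:M) ∈ Λ := zero_mem hA.1 ⟨a, by rw [ha]; simp⟩
    rw [ha] at h0 ⊢
    rw [Finset.mem_singleton.mp h0]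
  rintro ⟨Λ₁, hA₁, h₁⟩ ⟨Λ₂, hA₂, h₂⟩
  apply Subtype.ext
  simp only []
  rw [key Λ₁ hA₁ h₁, key Λ₂ hA₂ h₂]

lemma card_le_one_of_subsingleton (α : Type*) [Subsingleton α] : Nat.card α ≤ 1 := by
  rcases Nat.eq_zero_or_pos (Nat.card α) with h|h
  · omega
  · have : Nat.card α = 1 := Nat.card_eq_one_iff_unique.mpr
      ⟨‹_›, (Nat.card_pos_iff.mp h).1⟩
    omega

lemma main : ∀ n : ℕ, Finite (A n) ∧ Nat.card (A n) ≤ Nat.factorial (n-1) ^ 2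
  | 0 => by
    have := A_zero_subsingleton
    exact ⟨Finite.of_subsingleton, by simpa using card_le_one_of_subsingleton (A 0)⟩
  | 1 => by
    have := A_one_subsingleton
    exact ⟨Finite.of_subsingleton, by simpa using card_le_one_of_subsingleton (A 1)⟩
  | (n+2) => by
    obtain ⟨hfin, hcard⟩ := main (n+1)
    obtain ⟨f, hf⟩ := step n
    have hfin2 : Finite (A (n+2)) := Finite.of_injective f hf
    refine ⟨hfin2, ?_⟩
    have h1 : Nat.card (A (n+2)) ≤ Nat.card (A (n+1) × Fin (n+1) × Fin (n+1)) :=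
      Nat.card_le_card_of_injective f hf
    have h2 : Nat.card (A (n+1) × Fin (n+1) × Fin (n+1))
        = Nat.card (A (n+1)) * ((n+1) * (n+1)) := by
      rw [Nat.card_prod, Nat.card_prod]
      simp [Nat.card_eq_fintype_card]
    rw [h2] at h1
    have h3 : Nat.card (A (n+1)) * ((n+1) * (n+1))
        ≤ Nat.factorial n ^ 2 * ((n+1) * (n+1)) := by
      apply Nat.mul_le_mul_right
      simpa using hcard
    calc Nat.card (A (n+2)) ≤ Nat.factorial n ^ 2 * ((n+1)*(n+1)) := le_trans h1 h3
      _ = Nat.factorial (n+2-1) ^ 2 := by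
          simp [Nat.factorial_succ]
          ring

end AnchoredAux

/-- The number of anchored subsets of the finitely supported sequences with cardinality
exactly `n` is at most `((n−1)!)²`. -/
theorem card_anchored_le (n : ℕ) :
    Nat.card {Λ : Finset (ℕ →₀ ℕ) // Anchored Λ ∧ Λ.card = n} ≤
      Nat.factorial (n - 1) ^ 2 :=
  (AnchoredAux.main n).2
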